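/- Let A be a unital *-subalgebra of L(H) with maximal projector family {P_1,...,P_p} summing to 1 and such that P_i A P_j ≠ 0 for all i,j. Then dim_ℂ A = p², and a basis is given by elements E_{ij} ∈ P_i A P_j satisfying E_{ij} E_{kl} = δ_{jk} E_{il} and E_{ij}† = E_{ji} (a system of matrix units). -/

import Mathlib

open scoped BigOperators

/-- A family of nonzero, self-adjoint, pairwise orthogonal projectors in `A`. -/
def IsOrthProjFamily {E : Type*} [NormedAddCommGroup E] [InnerProductSpace ℂ E]
    [FiniteDimensional ℂ E] (A : StarSubalgebra ℂ (E →ₗ[ℂ] E))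
    {p : ℕ} (P : Fin p → (E →ₗ[ℂ] E)) : Prop :=
  (∀ i, P i ∈ A) ∧ (∀ i, P i ≠ 0) ∧ (∀ i, star (P i) = P i) ∧
    (∀ i j, P i * P j = if i = j then P i else 0)

/-- Maximality: no such family spans a strictly larger subalgebra. -/
def IsMaximalOrthProjFamily {E : Type*} [NormedAddCommGroup E] [InnerProductSpace ℂ E]
    [FiniteDimensional ℂ E] (A : StarSubalgebra ℂ (E →ₗ[ℂ] E))
    {p : ℕ} (P : Fin p → (E →ₗ[ℂ] E)) : Prop :=
  IsOrthProjFamily A P ∧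
    ∀ (m : ℕ) (Q : Fin m → (E →ₗ[ℂ] E)), IsOrthProjFamily A Q →
      ¬ Algebra.adjoin ℂ (Set.range P) < Algebra.adjoin ℂ (Set.range Q)

open Polynomial

lemma star_aeval_eq {R : Type*} [Ring R] [StarRing R] [Algebra ℂ R] [StarModule ℂ R]
    (T : R) (hT : star T = T) (q : ℂ[X]) :
    star (aeval T q) = aeval T (q.map (starRingEnd ℂ)) := by
  induction q using Polynomial.induction_on with
  | C a => simp [Algebra.algebraMap_eq_smul_one, star_smul]
  | add p q hp hq => simp [hp, hq]
  | monomial n a _ =>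
      simp [star_smul, star_pow, hT, Algebra.algebraMap_eq_smul_one]

lemma commute_aeval {R : Type*} [Ring R] [Algebra ℂ R] {X T : R} (h : Commute X T) (q : ℂ[X]) :
    Commute X (aeval T q) := by
  induction q using Polynomial.induction_on with
  | C a => simpa [Algebra.algebraMap_eq_smul_one] using (Commute.one_right X).smul_right a
  | add p q hp hq => simpa using hp.add_right hq
  | monomial n a hp =>
      simpa [Algebra.algebraMap_eq_smul_one] using ((h.pow_right (n+1)).smul_right a)

lemma aeval_mem {R : Type*} [Ring R] [Algebra ℂ R] (A : Subalgebra ℂ R)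
    {T : R} (hT : T ∈ A) (q : ℂ[X]) : aeval T q ∈ A := by
  have h : Algebra.adjoin ℂ {T} ≤ A := Algebra.adjoin_le (by simpa using hT)
  exact h (by rw [Algebra.adjoin_singleton_eq_range_aeval]; exact ⟨q, rfl⟩)

lemma adjoin_le_span {R : Type*} [Ring R] [Algebra ℂ R] {p : ℕ} (P : Fin p → R)
    (hmul : ∀ i j, P i * P j = if i = j then P i else 0) :
    ∀ X ∈ Algebra.adjoin ℂ (Set.range P),
      X ∈ Submodule.span ℂ (insert (1:R) (Set.range P)) := by
  set S := Submodule.span ℂ (insert (1:R) (Set.range P)) with hS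
  have hgen : ∀ z ∈ insert (1:R) (Set.range P), ∀ x ∈ S, x * z ∈ S := by
    intro z hz x hx
    induction hx using Submodule.span_induction with
    | mem y hy =>
        rcases hy with rfl | ⟨i, rfl⟩
        · rcases hz with rfl | ⟨j, rfl⟩
          · simpa using Submodule.subset_span (s := insert (1:R) (Set.range P))
              (Set.mem_insert _ _)
          · simpa using Submodule.subset_span (Set.mem_insert_of_mem _ (Set.mem_range_self j))
        · rcases hz with rfl | ⟨j, rfl⟩
          · simpa using Submodule.subset_span (Set.mem_insert_of_mem _ (Set.mem_range_self i))
          · rw [hmul i j]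
            split
            · exact Submodule.subset_span (Set.mem_insert_of_mem _ (Set.mem_range_self i))
            · exact zero_mem S
    | zero => simp [zero_mem S]
    | add a b _ _ ha hb => simpa [add_mul] using add_mem ha hb
    | smul c a _ ha => simpa [smul_mul_assoc] using Submodule.smul_mem S c ha
  have hmulS : ∀ x ∈ S, ∀ y ∈ S, x * y ∈ S := by
    intro x hx y hy
    induction hy using Submodule.span_induction with
    | mem z hz => exact hgen z hz x hx
    | zero => simp [zero_mem S]
    | add a b _ _ ha hb => simpa [mul_add] using add_mem ha hb
    | smul c a _ ha => simpa [mul_smul_comm] using Submodule.smul_mem S c ha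
  intro X hX
  induction hX using Algebra.adjoin_induction with
  | mem x hx => exact Submodule.subset_span (Set.mem_insert_of_mem _ hx)
  | algebraMap r =>
      simpa [Algebra.algebraMap_eq_smul_one] using
        Submodule.smul_mem S r (Submodule.subset_span (Set.mem_insert _ _))
  | add x y _ _ hx hy => exact add_mem hx hy
  | mul x y _ _ hx hy => exact hmulS x hx y hy

lemma sandwich_scalar_of_span {R : Type*} [Ring R] [Algebra ℂ R] {p : ℕ} (P : Fin p → R)
    (hmul : ∀ i j, P i * P j = if i = j then P i else 0) (i : Fin p) :
    ∀ X ∈ Submodule.span ℂ (insert (1:R) (Set.range P)),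
      ∃ c : ℂ, P i * X * P i = c • P i := by
  intro X hX
  induction hX using Submodule.span_induction with
  | mem y hy =>
      rcases hy with rfl | ⟨j, rfl⟩
      · exact ⟨1, by simpa using (hmul i i).trans (if_pos rfl)⟩
      · rcases eq_or_ne i j with rfl | hij
        · exact ⟨1, by simp [hmul i i]⟩
        · refine ⟨0, ?_⟩
          rw [hmul i j, if_neg hij]
          simp
  | zero => exact ⟨0, by simp⟩
  | add a b _ _ ha hb =>
      obtain ⟨c, hc⟩ := ha; obtain ⟨d, hd⟩ := hb
      exact ⟨c + d, by rw [mul_add, add_mul, hc, hd, add_smul]⟩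
  | smul c a _ ha =>
      obtain ⟨d, hd⟩ := ha
      exact ⟨c * d, by rw [mul_smul_comm, smul_mul_assoc, hd, smul_smul]⟩

lemma blockScalar {E : Type*} [NormedAddCommGroup E] [InnerProductSpace ℂ E]
    [FiniteDimensional ℂ E] (A : StarSubalgebra ℂ (E →ₗ[ℂ] E))
    {p : ℕ} (P : Fin p → (E →ₗ[ℂ] E))
    (hP : IsMaximalOrthProjFamily A P)
    (i : Fin p) {M : E →ₗ[ℂ] E} (hM : M ∈ A) :
    ∃ c : ℂ, P i * M * P i = c • P i := by
  classical
  obtain ⟨⟨hmem, hne, hstar, hmul⟩, hmax⟩ := hP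
  by_contra hcon
  push_neg at hcon
  have hPi : P i * P i = P i := by simpa using hmul i i
  -- Step 1: extract a self-adjoint non-scalar element of the corner
  have key : ∃ T : E →ₗ[ℂ] E,
      T ∈ A ∧ star T = T ∧ P i * T * P i = T ∧ ∀ c : ℂ, T ≠ c • P i := by
    set S := P i * M * P i with hSdef
    have hSA : S ∈ A := mul_mem (mul_mem (hmem i) hM) (hmem i)
    have hform : ∀ N : E →ₗ[ℂ] E, P i * (P i * N * P i) * P i = P i * N * P i := by
      intro N
      have h : P i * (P i * N * P i) * P i = (P i * P i) * N * (P i * P i) := by noncomm_ring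
      rw [h, hPi]
    have hstarS : star S = P i * star M * P i := by
      rw [hSdef, star_mul, star_mul, hstar i, mul_assoc]
    by_cases h1 : ∃ c : ℂ, S + star S = c • P i
    · by_cases h2 : ∃ c : ℂ, Complex.I • (S - star S) = c • P i
      · obtain ⟨c1, hc1⟩ := h1; obtain ⟨c2, hc2⟩ := h2
        exfalso
        apply hcon ((c1 - Complex.I * c2) / 2)
        have hminus : S - star S = (-Complex.I) • (Complex.I • (S - star S)) := by
          rw [smul_smul]; norm_num
        have h2S : (2:ℂ) • S = (c1 - Complex.I * c2) • P i := by
          have : (2:ℂ) • S = (S + star S) + (S - star S) := by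
            rw [two_smul]; abel
          rw [this, hc1, hminus, hc2, smul_smul, ← add_smul]
          ring_nf
        have := congrArg (fun X => ((2:ℂ))⁻¹ • X) h2S
        simp only [smul_smul] at this
        rw [inv_mul_cancel₀ (two_ne_zero), one_smul] at this
        rw [this]
        congr 1
        ring
      · push_neg at h2
        refine ⟨Complex.I • (S - star S), ?_, ?_, ?_, h2⟩
        · exact SMulMemClass.smul_mem _ (sub_mem hSA (star_mem hSA))
        · rw [star_smul, star_sub, star_star, Complex.star_def, Complex.conj_I,
            neg_smul, ← smul_neg, neg_sub]
        · rw [mul_smul_comm, smul_mul_assoc]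
          congr 1
          rw [mul_sub, sub_mul, hform M, hstarS, hform (star M), ← hstarS]
    · push_neg at h1
      refine ⟨S + star S, add_mem hSA (star_mem hSA), ?_, ?_, h1⟩
      · rw [star_add, star_star, add_comm]
      · rw [mul_add, add_mul, hform M, hstarS, hform (star M), ← hstarS]
  obtain ⟨T, hTA, hTstar, hTform, hTns⟩ := key
  have hPT : P i * T = T := by
    conv_lhs => rw [← hTform]
    have h : P i * (P i * T * P i) = (P i * P i) * T * P i := by noncomm_ring
    rw [h, hPi, hTform]
  have hTP : T * P i = T := by
    conv_lhs => rw [← hTform]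
    have h : (P i * T * P i) * P i = P i * T * (P i * P i) := by noncomm_ring
    rw [h, hPi, hTform]
  -- Step 2: spectral decomposition of T
  have hsymm : (T : E →ₗ[ℂ] E).IsSymmetric :=
    (LinearMap.isSymmetric_iff_isSelfAdjoint T).2 hTstar
  set n := Module.finrank ℂ E with hn
  set b := hsymm.eigenvectorBasis rfl with hbdef
  set μ : Fin n → ℝ := hsymm.eigenvalues rfl with hμdef
  have hb : ∀ k, Module.End.HasEigenvector T ((μ k : ℝ) : ℂ) (b k) :=
    fun k => hsymm.hasEigenvector_eigenvectorBasis rfl k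
  set Λ : Finset ℂ := Finset.image (fun k => ((μ k : ℝ) : ℂ)) Finset.univ with hΛ
  have hTne : T ≠ 0 := fun h => hTns 0 (by simpa using h)
  have hex : ∃ k, ((μ k : ℝ) : ℂ) ≠ 0 := by
    by_contra hall
    push_neg at hall
    apply hTne
    apply b.toBasis.ext
    intro k
    rw [OrthonormalBasis.coe_toBasis, (hb k).apply_eq_smul, hall k, zero_smul,
      LinearMap.zero_apply]
  obtain ⟨k₀, hk₀⟩ := hex
  set lam : ℂ := ((μ k₀ : ℝ) : ℂ) with hlam
  have hlamΛ : lam ∈ Λ := Finset.mem_image_of_mem _ (Finset.mem_univ k₀)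
  set Pf : ℂ[X] := ∏ l ∈ Λ, (X - C l) with hPf
  have haevalPf : aeval T Pf = 0 := by
    apply b.toBasis.ext
    intro k
    rw [OrthonormalBasis.coe_toBasis,
      Module.End.aeval_apply_of_hasEigenvector (hb k)]
    have hev : Pf.eval ((μ k : ℝ) : ℂ) = 0 := by
      rw [hPf, eval_prod]
      exact Finset.prod_eq_zero (Finset.mem_image_of_mem _ (Finset.mem_univ k)) (by simp)
    rw [hev, zero_smul, LinearMap.zero_apply]
  set q : ℂ[X] := ∏ l ∈ Λ.erase lam, (C (lam - l)⁻¹ * (X - C l)) with hq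
  have hq₀ : q.eval lam = 1 := by
    rw [hq, eval_prod]
    apply Finset.prod_eq_one
    intro l hl
    have hll : lam - l ≠ 0 := sub_ne_zero_of_ne (Ne.symm (Finset.ne_of_mem_erase hl))
    simp [inv_mul_cancel₀ hll]
  have hqvanish : ∀ l ∈ Λ, l ≠ lam → q.eval l = 0 := by
    intro l hl hnel
    rw [hq, eval_prod]
    exact Finset.prod_eq_zero (Finset.mem_erase.2 ⟨hnel, hl⟩) (by simp)
  have hdvd : Pf ∣ q * q - q := by
    rw [hPf]
    apply Finset.prod_dvd_of_coprime
    · intro a ha c hc hac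
      exact Polynomial.isCoprime_X_sub_C_of_isUnit_sub (sub_ne_zero_of_ne hac).isUnit
    · intro l hl
      rw [Polynomial.dvd_iff_isRoot]
      rcases eq_or_ne l lam with rfl | hnel
      · simp [IsRoot, hq₀]
      · simp [IsRoot, hqvanish l hl hnel]
  set R₀ := aeval T q with hR₀
  have hR₀idem : R₀ * R₀ = R₀ := by
    obtain ⟨d, hd⟩ := hdvd
    have h := congrArg (aeval T) hd
    rw [map_sub, map_mul, map_mul, haevalPf, zero_mul] at h
    exact sub_eq_zero.mp h
  have hR₀star : star R₀ = R₀ := by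
    rw [hR₀, star_aeval_eq T hTstar]
    congr 1
    conv_rhs => rw [hq]
    rw [hq, Polynomial.map_prod]
    apply Finset.prod_congr rfl
    intro l hl
    have hlreal : (starRingEnd ℂ) l = l := by
      obtain ⟨k, _, rfl⟩ := Finset.mem_image.1 (Finset.mem_of_mem_erase hl)
      exact Complex.conj_ofReal _
    have hlamreal : (starRingEnd ℂ) lam = lam := Complex.conj_ofReal _
    simp [Polynomial.map_mul, Polynomial.map_sub, map_inv₀, hlreal, hlamreal]
  have hcommPR : Commute (P i) R₀ := by
    apply commute_aeval
    show P i * T = T * P i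
    rw [hPT, hTP]
  set R := P i * R₀ with hRdef
  have hRP' : R = R₀ * P i := hcommPR.eq
  have hRA : R ∈ A := mul_mem (hmem i) (aeval_mem A.toSubalgebra hTA q)
  have hRidem : R * R = R := by
    have h : P i * R₀ * (P i * R₀) = P i * (R₀ * P i) * R₀ := by noncomm_ring
    rw [hRdef, h, ← hcommPR.eq]
    have h2 : P i * (P i * R₀) * R₀ = (P i * P i) * (R₀ * R₀) := by noncomm_ring
    rw [h2, hPi, hR₀idem]
  have hRstar : star R = R := by
    rw [hRdef, star_mul, hstar i, hR₀star, ← hcommPR.eq]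
  have hRPi : R * P i = R := by
    rw [hRP', mul_assoc, hPi]
  have hPiR : P i * R = R := by
    rw [hRdef, ← mul_assoc, hPi]
  have hRPj : ∀ j, j ≠ i → R * P j = 0 := by
    intro j hj
    rw [hRP', mul_assoc, hmul i j, if_neg (Ne.symm hj), mul_zero]
  have hPjR : ∀ j, j ≠ i → P j * R = 0 := by
    intro j hj
    rw [hRdef, ← mul_assoc, hmul j i, if_neg hj, zero_mul]
  have hbne : b k₀ ≠ 0 := by
    have h := b.toBasis.ne_zero k₀
    rwa [OrthonormalBasis.coe_toBasis] at h
  have hPib : P i (b k₀) = b k₀ := by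
    have h1 : T (b k₀) = lam • b k₀ := (hb k₀).apply_eq_smul
    have h2 : P i (T (b k₀)) = T (b k₀) := by rw [← Module.End.mul_apply, hPT]
    rw [h1, map_smul] at h2
    have h3 := congrArg (fun v => lam⁻¹ • v) h2
    simpa [smul_smul, inv_mul_cancel₀ hk₀] using h3
  have hRb : R (b k₀) = b k₀ := by
    have hR₀b : R₀ (b k₀) = b k₀ := by
      rw [hR₀, Module.End.aeval_apply_of_hasEigenvector (hb k₀)]
      rw [← hlam, hq₀, one_smul]
    rw [hRdef, Module.End.mul_apply, hR₀b, hPib]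
  have hRne : R ≠ 0 := by
    intro h
    rw [h, LinearMap.zero_apply] at hRb
    exact hbne hRb.symm
  have hRneP : R ≠ P i := by
    intro h
    have hTR : T * R₀ = lam • R₀ := by
      have hdvd2 : Pf ∣ (X - C lam) * q := by
        rw [hPf, ← Finset.mul_prod_erase Λ _ hlamΛ]
        apply mul_dvd_mul_left
        rw [hq, Finset.prod_mul_distrib]
        exact Dvd.intro_left _ rfl
      obtain ⟨d, hd⟩ := hdvd2
      have hz : aeval T ((X - C lam) * q) = 0 := by
        rw [hd, map_mul, haevalPf, zero_mul]
      rw [map_mul, map_sub, aeval_X, aeval_C, Algebra.algebraMap_eq_smul_one,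
        sub_mul, smul_mul_assoc, one_mul] at hz
      exact sub_eq_zero.mp hz
    apply hTns lam
    calc T = T * P i := hTP.symm
    _ = T * R := by rw [h]
    _ = T * R₀ * P i := by rw [hRP', mul_assoc]
    _ = (lam • R₀) * P i := by rw [hTR]
    _ = lam • (R₀ * P i) := smul_mul_assoc lam R₀ (P i)
    _ = lam • P i := by rw [← hRP', h]
  -- Step 3: the refined family
  set Q : Fin (p+1) → (E →ₗ[ℂ] E) :=
    Fin.cons R (fun k => if k = i then P i - R else P k) with hQ
  have hQ0 : Q 0 = R := by rw [hQ]; rfl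
  have hQsi : Q (Fin.succ i) = P i - R := by rw [hQ, Fin.cons_succ, if_pos rfl]
  have hQsj : ∀ j, j ≠ i → Q (Fin.succ j) = P j := by
    intro j hj; rw [hQ, Fin.cons_succ, if_neg hj]
  have hQfam : IsOrthProjFamily A Q := by
    refine ⟨?_, ?_, ?_, ?_⟩
    · intro a
      refine Fin.cases ?_ ?_ a
      · rw [hQ0]; exact hRA
      · intro k
        rcases eq_or_ne k i with rfl | hk
        · rw [hQsi]; exact sub_mem (hmem k) hRA
        · rw [hQsj k hk]; exact hmem k
    · intro a
      refine Fin.cases ?_ ?_ a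
      · rw [hQ0]; exact hRne
      · intro k
        rcases eq_or_ne k i with rfl | hk
        · rw [hQsi]; exact sub_ne_zero_of_ne (Ne.symm hRneP)
        · rw [hQsj k hk]; exact hne k
    · intro a
      refine Fin.cases ?_ ?_ a
      · rw [hQ0]; exact hRstar
      · intro k
        rcases eq_or_ne k i with rfl | hk
        · rw [hQsi, star_sub, hstar k, hRstar]
        · rw [hQsj k hk]; exact hstar k
    · intro a c
      refine Fin.cases ?_ ?_ a
      · refine Fin.cases ?_ ?_ c
        · rw [hQ0, if_pos rfl, hRidem]
        · intro l
          rw [if_neg (Ne.symm (Fin.succ_ne_zero l)), hQ0]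
          rcases eq_or_ne l i with rfl | hl
          · rw [hQsi, mul_sub, hRPi, hRidem, sub_self]
          · rw [hQsj l hl, hRPj l hl]
      · intro k
        refine Fin.cases ?_ ?_ c
        · rw [if_neg (Fin.succ_ne_zero k), hQ0]
          rcases eq_or_ne k i with rfl | hk
          · rw [hQsi, sub_mul, hPiR, hRidem, sub_self]
          · rw [hQsj k hk, hPjR k hk]
        · intro l
          rcases eq_or_ne k l with rfl | hkl
          · rw [if_pos rfl]
            rcases eq_or_ne k i with rfl | hk
            · rw [hQsi, sub_mul, mul_sub, mul_sub, hPi, hPiR, hRPi, hRidem]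
              abel
            · rw [hQsj k hk, hmul k k, if_pos rfl]
          · rw [if_neg (by simpa [Fin.succ_inj] using hkl)]
            rcases eq_or_ne k i with rfl | hk
            · rw [hQsi, hQsj l (Ne.symm hkl), sub_mul, hmul k l, if_neg hkl,
                hRPj l (Ne.symm hkl)]
              simp
            · rcases eq_or_ne l i with rfl | hl
              · rw [hQsj k hk, hQsi, mul_sub, hmul k l, if_neg hk, hPjR k hk, sub_self]
              · rw [hQsj k hk, hQsj l hl, hmul k l, if_neg hkl]
  -- Step 4: contradiction with maximality
  have hRQ : R ∈ Algebra.adjoin ℂ (Set.range Q) :=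
    Algebra.subset_adjoin ⟨0, hQ0⟩
  have hle : Algebra.adjoin ℂ (Set.range P) ≤ Algebra.adjoin ℂ (Set.range Q) := by
    apply Algebra.adjoin_le
    rintro _ ⟨j, rfl⟩
    rcases eq_or_ne j i with rfl | hj
    · have h2 : P j - R ∈ Algebra.adjoin ℂ (Set.range Q) :=
        Algebra.subset_adjoin ⟨Fin.succ j, hQsi⟩
      simpa using add_mem hRQ h2
    · exact Algebra.subset_adjoin ⟨Fin.succ j, hQsj j hj⟩
  have hnotmem : R ∉ Algebra.adjoin ℂ (Set.range P) := by
    intro hRadj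
    obtain ⟨c, hc⟩ := sandwich_scalar_of_span P hmul i R (adjoin_le_span P hmul R hRadj)
    have hReq : R = c • P i := by
      rw [← hc, hPiR, hRPi]
    have hcc : (c * c) • P i = c • P i := by
      have h := hRidem
      rw [hReq, smul_mul_assoc, mul_smul_comm, hPi, smul_smul] at h
      exact h
    have hc2 : c * c = c := by
      have h := sub_eq_zero.mpr hcc
      rw [← sub_smul] at h
      rcases smul_eq_zero.mp h with h0 | h0
      · exact sub_eq_zero.mp h0
      · exact absurd h0 (hne i)
    rcases eq_or_ne c 0 with rfl | hc0
    · rw [zero_smul] at hReq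
      exact hRne hReq
    · have hc1 : c = 1 := mul_left_cancel₀ hc0 (by rw [hc2, mul_one])
      rw [hc1, one_smul] at hReq
      exact hRneP hReq
  exact hmax (p+1) Q hQfam (lt_of_le_of_ne hle (fun h => hnotmem (h ▸ hRQ)))

theorem dim_eq_p_squared_matrix_units
    {E : Type*} [NormedAddCommGroup E] [InnerProductSpace ℂ E] [FiniteDimensional ℂ E]
    (A : StarSubalgebra ℂ (E →ₗ[ℂ] E)) {p : ℕ} (P : Fin p → (E →ₗ[ℂ] E))
    (hP : IsMaximalOrthProjFamily A P) (hsum : ∑ i, P i = 1)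
    (hclass : ∀ i j, ∃ M ∈ A, P i * M * P j ≠ 0) :
    Module.finrank ℂ A = p ^ 2 ∧
      ∃ F : Fin p → Fin p → (E →ₗ[ℂ] E),
        (∀ i j, F i j ∈ A ∧ ∃ M ∈ A, F i j = P i * M * P j) ∧
        (∀ i j k l, F i j * F k l = if j = k then F i l else 0) ∧
        (∀ i j, star (F i j) = F j i) ∧
        LinearIndependent ℂ (fun ij : Fin p × Fin p => F ij.1 ij.2) ∧
        Submodule.span ℂ (Set.range (fun ij : Fin p × Fin p => F ij.1 ij.2))
          = Subalgebra.toSubmodule A.toSubalgebra := by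
  classical
  obtain ⟨⟨hmem, hne, hstar, hmul⟩, -⟩ := id hP
  have hPP : ∀ j, P j * P j = P j := fun j => by simpa using hmul j j
  rcases Nat.eq_zero_or_pos p with rfl | hp
  · -- degenerate case : E is trivial
    have h10 : (1 : E →ₗ[ℂ] E) = 0 := by simpa using hsum.symm
    have hEsub : Subsingleton (E →ₗ[ℂ] E) := by
      constructor
      intro f g
      have hzero : ∀ f : E →ₗ[ℂ] E, f = 0 := by
        intro f
        ext x
        have hx : x = 0 := by
          have h := congrArg (fun (g : E →ₗ[ℂ] E) => g x) h10
          simpa using h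
        simp [hx]
      rw [hzero f, hzero g]
    haveI : Subsingleton A := ⟨fun a b => Subtype.ext (Subsingleton.elim _ _)⟩
    constructor
    · rw [Module.finrank_zero_of_subsingleton]
      simp
    · refine ⟨fun i => i.elim0, fun i => i.elim0, fun i => i.elim0, fun i => i.elim0,
        linearIndependent_empty_type, ?_⟩
      haveI : Subsingleton (Submodule ℂ (E →ₗ[ℂ] E)) := by
        constructor
        intro U V
        ext x
        simp [Subsingleton.elim x 0]
      exact Subsingleton.elim _ _
  · set i₀ : Fin p := ⟨0, hp⟩ with hi₀
    have hL : ∀ (j : Fin p) (Y : E →ₗ[ℂ] E), Y ∈ A → ∃ c : ℂ, P j * Y * P j = c • P j :=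
      fun j Y hY => blockScalar A P hP j hY
    have hPinner : ∀ (k : Fin p) (x y : E), (inner ℂ x (P k y) : ℂ) = inner ℂ (P k x) y := by
      intro k x y
      have h := LinearMap.adjoint_inner_right (P k) x y
      rwa [← LinearMap.star_eq_adjoint, hstar k] at h
    have hNN : ∀ (N : E →ₗ[ℂ] E) (x : E), (inner ℂ (N x) (N x) : ℂ) = inner ℂ x ((star N * N) x) := by
      intro N x
      rw [Module.End.mul_apply, LinearMap.star_eq_adjoint, LinearMap.adjoint_inner_right]
    -- construction of the partial isometries G j : P j ≃ P i₀
    have hGex : ∀ j : Fin p, ∃ G : E →ₗ[ℂ] E, G ∈ A ∧ P i₀ * G * P j = G ∧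
        star G * G = P j ∧ G * star G = P i₀ := by
      intro j
      obtain ⟨M, hMA, hMne⟩ := hclass i₀ j
      set N := P i₀ * M * P j with hN
      have hNA : N ∈ A := mul_mem (mul_mem (hmem i₀) hMA) (hmem j)
      have hNform : P i₀ * N * P j = N := by
        have h : P i₀ * (P i₀ * M * P j) * P j = (P i₀ * P i₀) * M * (P j * P j) := by
          noncomm_ring
        rw [hN, h, hPP i₀, hPP j]
      have hNP : N * P j = N := by
        conv_lhs => rw [← hNform]
        have h : (P i₀ * N * P j) * P j = P i₀ * N * (P j * P j) := by noncomm_ring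
        rw [h, hPP j, hNform]
      have hstarN : star N = P j * star M * P i₀ := by
        rw [hN, star_mul, star_mul, hstar i₀, hstar j, mul_assoc]
      have hform2 : star N * N = P j * (star M * P i₀ * M) * P j := by
        calc star N * N = (P j * star M * P i₀) * (P i₀ * M * P j) := by rw [hstarN, hN]
        _ = P j * (star M * (P i₀ * P i₀) * M) * P j := by noncomm_ring
        _ = P j * (star M * P i₀ * M) * P j := by rw [hPP i₀]
      obtain ⟨c, hc⟩ := hL j (star M * P i₀ * M)
        (mul_mem (mul_mem (star_mem hMA) (hmem i₀)) hMA)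
      have hcN : star N * N = c • P j := by rw [hform2, hc]
      have hNne : N ≠ 0 := hMne
      obtain ⟨x, hx⟩ : ∃ x, N x ≠ 0 := by
        by_contra hall
        push_neg at hall
        exact hNne (LinearMap.ext fun x => by simpa using hall x)
      have hPx : P j x ≠ 0 := by
        intro h0
        apply hx
        have h1 : N (P j x) = N x := by rw [← Module.End.mul_apply, hNP]
        rw [← h1, h0, map_zero]
      have hxPx : (inner ℂ x ((P j) x) : ℂ) = inner ℂ (P j x) (P j x) := by
        conv_lhs => rw [show (P j) x = P j (P j x) from by rw [← Module.End.mul_apply, hPP j]]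
        exact hPinner j x (P j x)
      have hinner1 : (inner ℂ (N x) (N x) : ℂ) = c * inner ℂ (P j x) (P j x) := by
        rw [hNN N x, hcN, LinearMap.smul_apply, inner_smul_right, hxPx]
      have h1 : ((‖N x‖ : ℂ))^2 = c * ((‖P j x‖ : ℂ))^2 := by
        have h0 := hinner1
        rw [inner_self_eq_norm_sq_to_K, inner_self_eq_norm_sq_to_K] at h0
        exact_mod_cast h0
      have hP2 : ((‖P j x‖ : ℂ))^2 ≠ 0 :=
        pow_ne_zero _ (by simpa [Complex.ofReal_eq_zero] using norm_ne_zero_iff.2 hPx)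
      set r : ℝ := ‖N x‖^2 / ‖P j x‖^2 with hr
      have hrpos : 0 < r :=
        div_pos (pow_pos (norm_pos_iff.2 hx) 2) (pow_pos (norm_pos_iff.2 hPx) 2)
      have hcr : c = (r : ℂ) := by
        have h2 : c = ((‖N x‖ : ℂ))^2 / ((‖P j x‖ : ℂ))^2 := (eq_div_iff hP2).2 h1.symm
        rw [h2, hr]
        push_cast
        ring
      set s : ℝ := Real.sqrt r with hs
      have hspos : 0 < s := Real.sqrt_pos.2 hrpos
      have hs0 : ((s : ℝ) : ℂ) ≠ 0 := by
        simpa [Complex.ofReal_eq_zero] using hspos.ne'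
      set G := (((s : ℝ) : ℂ))⁻¹ • N with hG
      have hGA : G ∈ A := SMulMemClass.smul_mem _ hNA
      have hGform : P i₀ * G * P j = G := by
        rw [hG, mul_smul_comm, smul_mul_assoc, hNform]
      have hGstarG : star G * G = P j := by
        have hss : star ((((s : ℝ) : ℂ))⁻¹) = (((s : ℝ) : ℂ))⁻¹ := by
          simp [Complex.star_def, map_inv₀, Complex.conj_ofReal]
        rw [hG, star_smul, hss, smul_mul_assoc, mul_smul_comm, smul_smul, hcN, smul_smul]
        have hsc : (((s : ℝ) : ℂ)) * (((s : ℝ) : ℂ)) = ((r : ℝ) : ℂ) := by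
          rw [← Complex.ofReal_mul, hs, Real.mul_self_sqrt hrpos.le]
        have hval : (((s : ℝ) : ℂ))⁻¹ * (((s : ℝ) : ℂ))⁻¹ * c = 1 := by
          rw [hcr, ← hsc, ← mul_inv]
          exact inv_mul_cancel₀ (mul_ne_zero hs0 hs0)
        rw [hval, one_smul]
      have hPG : P i₀ * G = G := by
        conv_lhs => rw [← hGform]
        have h : P i₀ * (P i₀ * G * P j) = (P i₀ * P i₀) * G * P j := by noncomm_ring
        rw [h, hPP i₀, hGform]
      have hGP : G * P j = G := by
        conv_lhs => rw [← hGform]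
        have h : (P i₀ * G * P j) * P j = P i₀ * G * (P j * P j) := by noncomm_ring
        rw [h, hPP j, hGform]
      have hstarGP : star G * P i₀ = star G := by
        rw [← hPG, star_mul, hstar i₀, mul_assoc, hPP i₀]
      set D := G * star G with hD
      have hDA : D ∈ A := mul_mem hGA (star_mem hGA)
      have hDform : P i₀ * D * P i₀ = D := by
        calc P i₀ * (G * star G) * P i₀ = (P i₀ * G) * (star G * P i₀) := by noncomm_ring
        _ = G * star G := by rw [hPG, hstarGP]
      obtain ⟨d, hd⟩ := hL i₀ D hDA
      have hdD : D = d • P i₀ := by rw [← hd, hDform]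
      have hDidem : D * D = D := by
        calc D * D = G * (star G * G) * star G := by rw [hD]; noncomm_ring
        _ = (G * P j) * star G := by rw [hGstarG]
        _ = D := by rw [hGP, hD]
      have hdd : d * d = d := by
        have h := hDidem
        rw [hdD, smul_mul_assoc, mul_smul_comm, hPP i₀, smul_smul] at h
        have h2 := sub_eq_zero.mpr h
        rw [← sub_smul] at h2
        rcases smul_eq_zero.mp h2 with h0 | h0
        · exact sub_eq_zero.mp h0
        · exact absurd h0 (hne i₀)
      have hd0 : d ≠ 0 := by
        intro h0
        have hD0 : D = 0 := by rw [hdD, h0, zero_smul]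
        apply hne j
        have hPj2 : P j * P j = star G * D * G := by
          rw [hD, ← hGstarG]
          noncomm_ring
        rw [← hPP j, hPj2, hD0, mul_zero, zero_mul]
      have hd1 : d = 1 := mul_left_cancel₀ hd0 (by rw [hdd, mul_one])
      refine ⟨G, hGA, hGform, hGstarG, ?_⟩
      rw [← hD, hdD, hd1, one_smul]
    choose G hGA hGform hGstarG hGGstar using hGex
    -- derived facts
    have hPG : ∀ j, P i₀ * G j = G j := by
      intro j
      conv_lhs => rw [← hGform j]
      have h : P i₀ * (P i₀ * G j * P j) = (P i₀ * P i₀) * G j * P j := by noncomm_ring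
      rw [h, hPP i₀, hGform j]
    have hGP : ∀ j, G j * P j = G j := by
      intro j
      conv_lhs => rw [← hGform j]
      have h : (P i₀ * G j * P j) * P j = P i₀ * G j * (P j * P j) := by noncomm_ring
      rw [h, hPP j, hGform j]
    have hPstarG : ∀ j, P j * star (G j) = star (G j) := by
      intro j
      rw [← hGP j, star_mul, hstar j, ← mul_assoc, hPP j]
    have hstarGP : ∀ j, star (G j) * P i₀ = star (G j) := by
      intro j
      rw [← hPG j, star_mul, hstar i₀, mul_assoc, hPP i₀]
    -- the matrix units
    set F : Fin p → Fin p → (E →ₗ[ℂ] E) := fun i j => star (G i) * G j with hF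
    have hFA : ∀ i j, F i j ∈ A := fun i j => mul_mem (star_mem (hGA i)) (hGA j)
    have hFform : ∀ i j, P i * F i j * P j = F i j := by
      intro i j
      calc P i * (star (G i) * G j) * P j = (P i * star (G i)) * (G j * P j) := by noncomm_ring
      _ = star (G i) * G j := by rw [hPstarG i, hGP j]
    have hFmul : ∀ i j k l, F i j * F k l = if j = k then F i l else 0 := by
      intro i j k l
      rcases eq_or_ne j k with rfl | hjk
      · rw [if_pos rfl]
        calc (star (G i) * G j) * (star (G j) * G l)
            = star (G i) * (G j * star (G j)) * G l := by noncomm_ring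
        _ = (star (G i) * P i₀) * G l := by rw [hGGstar j]
        _ = star (G i) * G l := by rw [hstarGP i]
      · rw [if_neg hjk]
        have hGjk : G j * star (G k) = 0 := by
          calc G j * star (G k) = (G j * P j) * (P k * star (G k)) := by
                rw [hGP j, hPstarG k]
          _ = G j * (P j * P k) * star (G k) := by noncomm_ring
          _ = 0 := by rw [hmul j k, if_neg hjk, mul_zero, zero_mul]
        calc (star (G i) * G j) * (star (G k) * G l)
            = star (G i) * (G j * star (G k)) * G l := by noncomm_ring
        _ = 0 := by rw [hGjk, mul_zero, zero_mul]
    have hFstar : ∀ i j, star (F i j) = F j i := by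
      intro i j
      rw [hF]
      simp only [star_mul, star_star]
    have hFdiag : ∀ i, F i i = P i := fun i => hGstarG i
    have hFne : ∀ i j, F i j ≠ 0 := by
      intro i j h
      have h2 := hFmul i j j i
      rw [h, zero_mul, if_pos rfl, hFdiag] at h2
      exact hne i h2.symm
    have hPFP : ∀ a b k l, P k * F a b * P l = if k = a ∧ l = b then F a b else 0 := by
      intro a b k l
      conv_lhs => rw [← hFform a b]
      have h : P k * (P a * F a b * P b) * P l = (P k * P a) * F a b * (P b * P l) := by
        noncomm_ring
      rw [h, hmul k a, hmul b l]
      by_cases hka : k = a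
      · by_cases hlb : l = b
        · rw [if_pos hka, if_pos (show b = l from hlb.symm), if_pos ⟨hka, hlb⟩, hka, hFform]
        · rw [if_pos hka, if_neg (show ¬(b = l) from fun h' => hlb h'.symm),
            if_neg (show ¬(k = a ∧ l = b) from fun h' => hlb h'.2), mul_zero]
      · rw [if_neg hka, if_neg (show ¬(k = a ∧ l = b) from fun h' => hka h'.1),
            zero_mul, zero_mul]
    -- decomposition of elements of A
    have hdecomp : ∀ Y ∈ A, ∀ i j, ∃ c : ℂ, P i * Y * P j = c • F i j := by
      intro Y hY i j
      set Z := G i * (P i * Y * P j) * star (G j) with hZ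
      have hZA : Z ∈ A :=
        mul_mem (mul_mem (hGA i) (mul_mem (mul_mem (hmem i) hY) (hmem j))) (star_mem (hGA j))
      have hZform : P i₀ * Z * P i₀ = Z := by
        calc P i₀ * (G i * (P i * Y * P j) * star (G j)) * P i₀
            = (P i₀ * G i) * (P i * Y * P j) * (star (G j) * P i₀) := by noncomm_ring
        _ = Z := by rw [hPG i, hstarGP j, hZ]
      obtain ⟨c, hc⟩ := hL i₀ Z hZA
      have hcZ : Z = c • P i₀ := by rw [← hc, hZform]
      refine ⟨c, ?_⟩
      have hsand : P i * (P i * Y * P j) * P j = P i * Y * P j := by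
        have h : P i * (P i * Y * P j) * P j = (P i * P i) * Y * (P j * P j) := by noncomm_ring
        rw [h, hPP i, hPP j]
      have h1 : star (G i) * Z * G j = P i * Y * P j := by
        calc star (G i) * (G i * (P i * Y * P j) * star (G j)) * G j
            = (star (G i) * G i) * (P i * Y * P j) * (star (G j) * G j) := by noncomm_ring
        _ = P i * (P i * Y * P j) * P j := by rw [hGstarG i, hGstarG j]
        _ = P i * Y * P j := hsand
      calc P i * Y * P j = star (G i) * Z * G j := h1.symm
      _ = star (G i) * (c • P i₀) * G j := by rw [hcZ]
      _ = c • ((star (G i) * P i₀) * G j) := by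
            rw [mul_smul_comm, smul_mul_assoc]
      _ = c • F i j := by rw [hstarGP i]
    have hsum_decomp : ∀ Y : E →ₗ[ℂ] E, Y = ∑ i, ∑ j, P i * Y * P j := by
      intro Y
      calc Y = (∑ i, P i) * Y * (∑ j, P j) := by rw [hsum, one_mul, mul_one]
      _ = ∑ i, ∑ j, P i * Y * P j := by
            rw [Finset.sum_mul, Finset.sum_mul]
            apply Finset.sum_congr rfl
            intro i _
            rw [Finset.mul_sum]
    -- span
    have hspan : Submodule.span ℂ (Set.range (fun ij : Fin p × Fin p => F ij.1 ij.2))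
        = Subalgebra.toSubmodule A.toSubalgebra := by
      apply le_antisymm
      · rw [Submodule.span_le]
        rintro _ ⟨ij, rfl⟩
        exact hFA ij.1 ij.2
      · intro Y hY
        have hYA : Y ∈ A := hY
        choose c hc using hdecomp Y hYA
        have hYsum : Y = ∑ ij : Fin p × Fin p, c ij.1 ij.2 • F ij.1 ij.2 := by
          rw [Fintype.sum_prod_type]
          calc Y = ∑ i, ∑ j, P i * Y * P j := hsum_decomp Y
          _ = ∑ i, ∑ j, c i j • F i j := by
                apply Finset.sum_congr rfl
                intro i _
                apply Finset.sum_congr rfl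
                intro j _
                exact hc i j
        rw [hYsum]
        exact Submodule.sum_mem _ (fun ij _ =>
          Submodule.smul_mem _ _ (Submodule.subset_span ⟨ij, rfl⟩))
    -- linear independence
    have hlin : LinearIndependent ℂ (fun ij : Fin p × Fin p => F ij.1 ij.2) := by
      rw [Fintype.linearIndependent_iff]
      intro g hg ij
      obtain ⟨k, l⟩ := ij
      have h2 : ∑ x : Fin p × Fin p, g x • (P k * F x.1 x.2 * P l) = 0 := by
        have h := congrArg (fun X => P k * X * P l) hg
        rw [Finset.mul_sum, Finset.sum_mul] at h
        simpa [mul_smul_comm, smul_mul_assoc] using h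
      rw [Finset.sum_eq_single (k, l)] at h2
      · rw [hPFP k l k l, if_pos ⟨rfl, rfl⟩] at h2
        rcases smul_eq_zero.mp h2 with h0 | h0
        · exact h0
        · exact absurd h0 (hFne k l)
      · intro x _ hx
        rw [hPFP x.1 x.2 k l, if_neg, smul_zero]
        intro hcond
        apply hx
        obtain ⟨h1', h2'⟩ := hcond
        exact Prod.ext h1'.symm h2'.symm
      · intro hx
        exact absurd (Finset.mem_univ _) hx
    -- conclusion
    refine ⟨?_, F, ?_, hFmul, hFstar, hlin, hspan⟩
    · have h1 := finrank_span_eq_card hlin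
      rw [hspan] at h1
      have h2 : Module.finrank ℂ A =
          Module.finrank ℂ (Subalgebra.toSubmodule A.toSubalgebra) := rfl
      rw [h2, h1]
      simp [sq]
    · intro i j
      exact ⟨hFA i j, F i j, hFA i j, (hFform i j).symm⟩
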